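/- For (s̲₁,s̲₂,s̄₁,s̄₂) ∈ 𝔻 and i ∈ {−1,0,1} the no-transaction zone for the first asset decomposes as t^{(0,i)}(s̲₁,s̲₂,s̄₁,s̄₂) = ⋃_{s ∈ [s̲₁,s̄₁]} t^{(0,i)}(s,s̲₂,s,s̄₂). -/

import Mathlib

open Set

/-- Membership of a price quadruple (s̲₁,s̲₂,s̄₁,s̄₂) in the domain 𝔻. -/
def memD (s1 s2 b1 b2 : ℝ) : Prop := 0 < s1 ∧ s1 ≤ b1 ∧ 0 < s2 ∧ s2 ≤ b2

/-- Admissible strategies 𝔸(x,y₁,y₂,s̲₁,s̲₂,s̄₁,s̄₂); an element q = (l₁,l₂,m₁,m₂). -/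
def A (x y1 y2 s1 s2 b1 b2 : ℝ) : Set (ℝ × ℝ × ℝ × ℝ) :=
  {q | 0 ≤ q.1 ∧ 0 ≤ q.2.1 ∧ 0 ≤ q.2.2.1 ∧ 0 ≤ q.2.2.2 ∧
       0 ≤ x + s1 * q.2.2.1 + s2 * q.2.2.2 - b1 * q.1 - b2 * q.2.1 ∧
       0 ≤ y1 - q.2.2.1 + q.1 ∧ 0 ≤ y2 - q.2.2.2 + q.2.1 ∧
       q.2.2.1 ≤ y1 ∧ q.2.2.2 ≤ y2}

/-- The function φ: utility of the post-transaction position, where g is the (static) utility. -/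
noncomputable def phi (g : ℝ → ℝ → ℝ → ℝ) (x y1 y2 s1 s2 b1 b2 : ℝ)
    (q : ℝ × ℝ × ℝ × ℝ) : ℝ :=
  g (x + s1 * q.2.2.1 + s2 * q.2.2.2 - b1 * q.1 - b2 * q.2.1)
    (y1 - q.2.2.1 + q.1) (y2 - q.2.2.2 + q.2.1)

/-- The static value function Φ = sup of φ over admissible strategies. -/
noncomputable def Phi (g : ℝ → ℝ → ℝ → ℝ) (x y1 y2 s1 s2 b1 b2 : ℝ) : ℝ :=
  sSup (phi g x y1 y2 s1 s2 b1 b2 '' A x y1 y2 s1 s2 b1 b2)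

/-- The set 𝔸^{(i₁,i₂)}: admissible strategies with prescribed signs of l₁−m₁, l₂−m₂ and
no simultaneous buy-and-sell. -/
def Asgn (i1 i2 : ℝ) (x y1 y2 s1 s2 b1 b2 : ℝ) : Set (ℝ × ℝ × ℝ × ℝ) :=
  {q | q ∈ A x y1 y2 s1 s2 b1 b2 ∧ i1 = Real.sign (q.1 - q.2.2.1) ∧
       i2 = Real.sign (q.2.1 - q.2.2.2) ∧ q.1 * q.2.2.1 + q.2.1 * q.2.2.2 = 0}

/-- The trading set 𝐭^{(i₁,i₂)}(s̲₁,s̲₂,s̄₁,s̄₂) ⊆ ℝ₊ × ℝ₊². -/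
def tset (g : ℝ → ℝ → ℝ → ℝ) (i1 i2 s1 s2 b1 b2 : ℝ) : Set (ℝ × ℝ × ℝ) :=
  {v | 0 ≤ v.1 ∧ 0 ≤ v.2.1 ∧ 0 ≤ v.2.2 ∧
       ∃ q ∈ Asgn i1 i2 v.1 v.2.1 v.2.2 s1 s2 b1 b2,
         Phi g v.1 v.2.1 v.2.2 s1 s2 b1 b2 = phi g v.1 v.2.1 v.2.2 s1 s2 b1 b2 q}

/-- The parameter domain ℝ₊ × ℝ₊² × 𝔻, as a subset of ℝ⁷;
a point is p = (x, y₁, y₂, s̲₁, s̲₂, s̄₁, s̄₂). -/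
def Param : Set (ℝ × ℝ × ℝ × ℝ × ℝ × ℝ × ℝ) :=
  {p | 0 ≤ p.1 ∧ 0 ≤ p.2.1 ∧ 0 ≤ p.2.2.1 ∧
       memD p.2.2.2.1 p.2.2.2.2.1 p.2.2.2.2.2.1 p.2.2.2.2.2.2}

/-- 𝔸 as a function of the bundled parameter. -/
def AP (p : ℝ × ℝ × ℝ × ℝ × ℝ × ℝ × ℝ) : Set (ℝ × ℝ × ℝ × ℝ) :=
  A p.1 p.2.1 p.2.2.1 p.2.2.2.1 p.2.2.2.2.1 p.2.2.2.2.2.1 p.2.2.2.2.2.2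

/-- φ as a function of the bundled parameter. -/
noncomputable def phiP (g : ℝ → ℝ → ℝ → ℝ) (p : ℝ × ℝ × ℝ × ℝ × ℝ × ℝ × ℝ)
    (q : ℝ × ℝ × ℝ × ℝ) : ℝ :=
  phi g p.1 p.2.1 p.2.2.1 p.2.2.2.1 p.2.2.2.2.1 p.2.2.2.2.2.1 p.2.2.2.2.2.2 q

/-- Φ as a function of the bundled parameter. -/
noncomputable def PhiP (g : ℝ → ℝ → ℝ → ℝ) (p : ℝ × ℝ × ℝ × ℝ × ℝ × ℝ × ℝ) : ℝ :=
  Phi g p.1 p.2.1 p.2.2.1 p.2.2.2.1 p.2.2.2.2.1 p.2.2.2.2.2.1 p.2.2.2.2.2.2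

namespace S18

variable {g : ℝ → ℝ → ℝ → ℝ}

lemma gmono (hg1 : ∀ a aQ b c : ℝ, 0 ≤ a → 0 ≤ b → 0 ≤ c → a < aQ → g a b c < g aQ b c)
    (hg2 : ∀ a b bQ c : ℝ, 0 ≤ a → 0 ≤ b → 0 ≤ c → b < bQ → g a b c < g a bQ c)
    (hg3 : ∀ a b c cQ : ℝ, 0 ≤ a → 0 ≤ b → 0 ≤ c → c < cQ → g a b c < g a b cQ)
    {a b c a' b' c' : ℝ} (ha : 0 ≤ a) (hb : 0 ≤ b) (hc : 0 ≤ c)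
    (h1 : a ≤ a') (h2 : b ≤ b') (h3 : c ≤ c') : g a b c ≤ g a' b' c' := by
  have ha' := ha.trans h1
  have hb' := hb.trans h2
  have t1 : g a b c ≤ g a' b c := by
    rcases eq_or_lt_of_le h1 with h | h
    · rw [h]
    · exact (hg1 a a' b c ha hb hc h).le
  have t2 : g a' b c ≤ g a' b' c := by
    rcases eq_or_lt_of_le h2 with h | h
    · rw [h]
    · exact (hg2 a' b b' c ha' hb hc h).le
  have t3 : g a' b' c ≤ g a' b' c' := by
    rcases eq_or_lt_of_le h3 with h | h
    · rw [h]
    · exact (hg3 a' b' c c' ha' hb' hc h).le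
  exact t1.trans (t2.trans t3)

lemma bddAboveA
    (hg1 : ∀ a aQ b c : ℝ, 0 ≤ a → 0 ≤ b → 0 ≤ c → a < aQ → g a b c < g aQ b c)
    (hg2 : ∀ a b bQ c : ℝ, 0 ≤ a → 0 ≤ b → 0 ≤ c → b < bQ → g a b c < g a bQ c)
    (hg3 : ∀ a b c cQ : ℝ, 0 ≤ a → 0 ≤ b → 0 ≤ c → c < cQ → g a b c < g a b cQ)
    {x y1 y2 s1 s2 b1 b2 : ℝ} (hx : 0 ≤ x) (hy1 : 0 ≤ y1) (hy2 : 0 ≤ y2)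
    (hD : memD s1 s2 b1 b2) :
    BddAbove (phi g x y1 y2 s1 s2 b1 b2 '' A x y1 y2 s1 s2 b1 b2) := by
  obtain ⟨hs1, hs1b, hs2, hs2b⟩ := hD
  have hb1 : 0 < b1 := lt_of_lt_of_le hs1 hs1b
  have hb2 : 0 < b2 := lt_of_lt_of_le hs2 hs2b
  set K := x + s1 * y1 + s2 * y2 with hK
  refine ⟨g K (y1 + K / b1) (y2 + K / b2), ?_⟩
  rintro z ⟨q, hq, rfl⟩
  obtain ⟨hl1, hl2, hm1, hm2, hcash, hh1, hh2, hm1y, hm2y⟩ := hq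
  have e1 : s1 * q.2.2.1 ≤ s1 * y1 := mul_le_mul_of_nonneg_left hm1y hs1.le
  have e2 : s2 * q.2.2.2 ≤ s2 * y2 := mul_le_mul_of_nonneg_left hm2y hs2.le
  have hbl1 : 0 ≤ b1 * q.1 := mul_nonneg hb1.le hl1
  have hbl2 : 0 ≤ b2 * q.2.1 := mul_nonneg hb2.le hl2
  have hcK : x + s1 * q.2.2.1 + s2 * q.2.2.2 - b1 * q.1 - b2 * q.2.1 ≤ K := by
    simp only [hK]; linarith
  have hl1K : q.1 ≤ K / b1 := by
    rw [le_div_iff₀ hb1]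
    nlinarith
  have hl2K : q.2.1 ≤ K / b2 := by
    rw [le_div_iff₀ hb2]
    nlinarith
  have hh1K : y1 - q.2.2.1 + q.1 ≤ y1 + K / b1 := by linarith
  have hh2K : y2 - q.2.2.2 + q.2.1 ≤ y2 + K / b2 := by linarith
  exact gmono hg1 hg2 hg3 hcash hh1 hh2 hcK hh1K hh2K

lemma combo
    (hg : StrictConcaveOn ℝ {v : ℝ × ℝ × ℝ | 0 ≤ v.1 ∧ 0 ≤ v.2.1 ∧ 0 ≤ v.2.2}
      (fun v => g v.1 v.2.1 v.2.2))
    {a0 b0 c0 a1 b1 c1 M η : ℝ}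
    (h0a : 0 ≤ a0) (h0b : 0 ≤ b0) (h0c : 0 ≤ c0)
    (h1a : 0 ≤ a1) (h1b : 0 ≤ b1) (h1c : 0 ≤ c1)
    (hM : M < g a0 b0 c0) (hη : 0 < η) :
    ∃ ρ : ℝ, 0 < ρ ∧ ρ < 1 ∧ ρ < η ∧
      M < g ((1-ρ)*a0+ρ*a1) ((1-ρ)*b0+ρ*b1) ((1-ρ)*c0+ρ*c1) := by
  set v0 := g a0 b0 c0 with hv0
  set v1 := g a1 b1 c1 with hv1
  have habs : (0:ℝ) < |v0 - v1| + 1 := by positivity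
  set ρ := min (min (1/2) (η/2)) ((v0 - M)/(2*(|v0 - v1|+1))) with hρ
  have hρpos : 0 < ρ := by
    apply lt_min (lt_min (by norm_num) (by linarith))
    exact div_pos (by linarith) (by positivity)
  have hρhalf : ρ ≤ 1/2 := (min_le_left _ _).trans (min_le_left _ _)
  have hρη : ρ < η := lt_of_le_of_lt ((min_le_left _ _).trans (min_le_right _ _)) (by linarith)
  have hρkey : ρ ≤ (v0 - M)/(2*(|v0 - v1|+1)) := min_le_right _ _
  refine ⟨ρ, hρpos, by linarith, hρη, ?_⟩
  have hmem0 : ((a0, b0, c0) : ℝ×ℝ×ℝ) ∈ {v : ℝ × ℝ × ℝ | 0 ≤ v.1 ∧ 0 ≤ v.2.1 ∧ 0 ≤ v.2.2} :=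
    ⟨h0a, h0b, h0c⟩
  have hmem1 : ((a1, b1, c1) : ℝ×ℝ×ℝ) ∈ {v : ℝ × ℝ × ℝ | 0 ≤ v.1 ∧ 0 ≤ v.2.1 ∧ 0 ≤ v.2.2} :=
    ⟨h1a, h1b, h1c⟩
  have hconc := hg.concaveOn.2 hmem0 hmem1 (show (0:ℝ) ≤ 1 - ρ by linarith) hρpos.le
    (by ring : (1 - ρ) + ρ = 1)
  have hpt : (1-ρ) • ((a0, b0, c0) : ℝ×ℝ×ℝ) + ρ • ((a1, b1, c1) : ℝ×ℝ×ℝ)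
      = ((1-ρ)*a0+ρ*a1, (1-ρ)*b0+ρ*b1, (1-ρ)*c0+ρ*c1) := by
    simp [Prod.ext_iff, smul_eq_mul]
  rw [hpt] at hconc
  simp only [smul_eq_mul] at hconc
  have key : M < (1-ρ) * v0 + ρ * v1 := by
    have h1 : v0 - v1 ≤ |v0 - v1| := le_abs_self _
    have h2 : ρ * (v0 - v1) ≤ ρ * |v0 - v1| := mul_le_mul_of_nonneg_left h1 hρpos.le
    have h3 : ρ * |v0 - v1| ≤ (v0 - M)/(2*(|v0-v1|+1)) * (|v0-v1|+1) := by
      apply mul_le_mul hρkey (by linarith) (abs_nonneg _) (div_nonneg (by linarith) (by positivity))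
    have h4 : (v0 - M)/(2*(|v0-v1|+1)) * (|v0-v1|+1) = (v0 - M)/2 := by
      field_simp
    nlinarith
  calc M < (1-ρ) * v0 + ρ * v1 := key
    _ ≤ _ := hconc


/-- Value of a frictionless "plan" (n, l2, m2). -/
noncomputable def pval (g : ℝ → ℝ → ℝ → ℝ) (x y1 y2 s2 b2 s n l2 m2 : ℝ) : ℝ :=
  g (x - s*n + s2*m2 - b2*l2) (y1 + n) (y2 - m2 + l2)

def Feas (x y1 y2 s2 b2 s n l2 m2 : ℝ) : Prop :=
  0 ≤ y1 + n ∧ 0 ≤ l2 ∧ 0 ≤ m2 ∧ m2 ≤ y2 ∧ 0 ≤ x - s*n + s2*m2 - b2*l2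

def SellI (g : ℝ → ℝ → ℝ → ℝ) (x y1 y2 s2 b2 M s : ℝ) : Prop :=
  ∃ n l2 m2, Feas x y1 y2 s2 b2 s n l2 m2 ∧ n < 0 ∧ M < pval g x y1 y2 s2 b2 s n l2 m2

def BuyI (g : ℝ → ℝ → ℝ → ℝ) (x y1 y2 s2 b2 M s : ℝ) : Prop :=
  ∃ n l2 m2, Feas x y1 y2 s2 b2 s n l2 m2 ∧ 0 < n ∧ M < pval g x y1 y2 s2 b2 s n l2 m2

/-- Scalar form of concavity of g on the nonnegative orthant. -/
lemma concave3
    (hg : StrictConcaveOn ℝ {v : ℝ × ℝ × ℝ | 0 ≤ v.1 ∧ 0 ≤ v.2.1 ∧ 0 ≤ v.2.2}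
      (fun v => g v.1 v.2.1 v.2.2))
    {a0 b0 c0 a1 b1 c1 t : ℝ}
    (h0a : 0 ≤ a0) (h0b : 0 ≤ b0) (h0c : 0 ≤ c0)
    (h1a : 0 ≤ a1) (h1b : 0 ≤ b1) (h1c : 0 ≤ c1)
    (ht0 : 0 ≤ t) (ht1 : t ≤ 1) :
    t * g a0 b0 c0 + (1-t) * g a1 b1 c1 ≤
      g (t*a0+(1-t)*a1) (t*b0+(1-t)*b1) (t*c0+(1-t)*c1) := by
  have hmem0 : ((a0, b0, c0) : ℝ×ℝ×ℝ) ∈ {v : ℝ × ℝ × ℝ | 0 ≤ v.1 ∧ 0 ≤ v.2.1 ∧ 0 ≤ v.2.2} :=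
    ⟨h0a, h0b, h0c⟩
  have hmem1 : ((a1, b1, c1) : ℝ×ℝ×ℝ) ∈ {v : ℝ × ℝ × ℝ | 0 ≤ v.1 ∧ 0 ≤ v.2.1 ∧ 0 ≤ v.2.2} :=
    ⟨h1a, h1b, h1c⟩
  have hconc := hg.concaveOn.2 hmem0 hmem1 ht0 (show (0:ℝ) ≤ 1 - t by linarith)
    (by ring : t + (1 - t) = 1)
  have hpt : t • ((a0, b0, c0) : ℝ×ℝ×ℝ) + (1-t) • ((a1, b1, c1) : ℝ×ℝ×ℝ)
      = (t*a0+(1-t)*a1, t*b0+(1-t)*b1, t*c0+(1-t)*c1) := by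
    simp [Prod.ext_iff, smul_eq_mul]
  rw [hpt] at hconc
  simpa using hconc

lemma sell_mono
    (hg1 : ∀ a aQ b c : ℝ, 0 ≤ a → 0 ≤ b → 0 ≤ c → a < aQ → g a b c < g aQ b c)
    (hg2 : ∀ a b bQ c : ℝ, 0 ≤ a → 0 ≤ b → 0 ≤ c → b < bQ → g a b c < g a bQ c)
    (hg3 : ∀ a b c cQ : ℝ, 0 ≤ a → 0 ≤ b → 0 ≤ c → c < cQ → g a b c < g a b cQ)
    {x y1 y2 s2 b2 M s s' : ℝ} (hss : s ≤ s')
    (h : SellI g x y1 y2 s2 b2 M s) : SellI g x y1 y2 s2 b2 M s' := by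
  obtain ⟨n, l2, m2, ⟨f1, f2, f3, f4, f5⟩, hn, hv⟩ := h
  have hcash : x - s*n + s2*m2 - b2*l2 ≤ x - s'*n + s2*m2 - b2*l2 := by nlinarith
  have hh2 : 0 ≤ y2 - m2 + l2 := by linarith
  refine ⟨n, l2, m2, ⟨f1, f2, f3, f4, by linarith⟩, hn, lt_of_lt_of_le hv ?_⟩
  exact gmono hg1 hg2 hg3 f5 f1 hh2 hcash le_rfl le_rfl

lemma buy_mono
    (hg1 : ∀ a aQ b c : ℝ, 0 ≤ a → 0 ≤ b → 0 ≤ c → a < aQ → g a b c < g aQ b c)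
    (hg2 : ∀ a b bQ c : ℝ, 0 ≤ a → 0 ≤ b → 0 ≤ c → b < bQ → g a b c < g a bQ c)
    (hg3 : ∀ a b c cQ : ℝ, 0 ≤ a → 0 ≤ b → 0 ≤ c → c < cQ → g a b c < g a b cQ)
    {x y1 y2 s2 b2 M s s' : ℝ} (hss : s' ≤ s)
    (h : BuyI g x y1 y2 s2 b2 M s) : BuyI g x y1 y2 s2 b2 M s' := by
  obtain ⟨n, l2, m2, ⟨f1, f2, f3, f4, f5⟩, hn, hv⟩ := h
  have hcash : x - s*n + s2*m2 - b2*l2 ≤ x - s'*n + s2*m2 - b2*l2 := by nlinarith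
  have hh2 : 0 ≤ y2 - m2 + l2 := by linarith
  refine ⟨n, l2, m2, ⟨f1, f2, f3, f4, by linarith⟩, hn, lt_of_lt_of_le hv ?_⟩
  exact gmono hg1 hg2 hg3 f5 f1 hh2 hcash le_rfl le_rfl

lemma no_both
    (hg : StrictConcaveOn ℝ {v : ℝ × ℝ × ℝ | 0 ≤ v.1 ∧ 0 ≤ v.2.1 ∧ 0 ≤ v.2.2}
      (fun v => g v.1 v.2.1 v.2.2))
    (hg1 : ∀ a aQ b c : ℝ, 0 ≤ a → 0 ≤ b → 0 ≤ c → a < aQ → g a b c < g aQ b c)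
    (hg2 : ∀ a b bQ c : ℝ, 0 ≤ a → 0 ≤ b → 0 ≤ c → b < bQ → g a b c < g a bQ c)
    (hg3 : ∀ a b c cQ : ℝ, 0 ≤ a → 0 ≤ b → 0 ≤ c → c < cQ → g a b c < g a b cQ)
    {x y1 y2 s2 b2 M : ℝ} (hy1 : 0 ≤ y1)
    (hM0 : ∀ l2 m2 : ℝ, 0 ≤ l2 → 0 ≤ m2 → m2 ≤ y2 → 0 ≤ x + s2*m2 - b2*l2 →
      g (x + s2*m2 - b2*l2) y1 (y2 - m2 + l2) ≤ M)
    {s' s'' : ℝ} (hss : s' ≤ s'')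
    (hS : SellI g x y1 y2 s2 b2 M s') (hB : BuyI g x y1 y2 s2 b2 M s'') : False := by
  obtain ⟨n', l2', m2', ⟨f1', f2', f3', f4', f5'⟩, hn', hv'⟩ := hS
  obtain ⟨n'', l2'', m2'', ⟨f1'', f2'', f3'', f4'', f5''⟩, hn'', hv''⟩ := hB
  simp only [pval] at hv' hv''
  have hden : 0 < n'' - n' := by linarith
  have hdne : n'' - n' ≠ 0 := hden.ne'
  obtain ⟨lam, hlam⟩ : ∃ lam : ℝ, lam = n'' / (n'' - n') := ⟨_, rfl⟩
  have hlpos : 0 < lam := hlam ▸ div_pos hn'' hden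
  have hllt : lam < 1 := hlam ▸ (div_lt_one hden).2 (by linarith)
  have hh2'nn : 0 ≤ y2 - m2' + l2' := by linarith
  have hh2''nn : 0 ≤ y2 - m2'' + l2'' := by linarith
  have key := concave3 hg f5' f1' hh2'nn f5'' f1'' hh2''nn hlpos.le hllt.le
  have hy : lam*(y1+n') + (1-lam)*(y1+n'') = y1 := by
    rw [hlam]; field_simp; ring
  rw [hy] at key
  have hh2bar : lam*(y2 - m2' + l2') + (1-lam)*(y2 - m2'' + l2'')
      = y2 - (lam*m2' + (1-lam)*m2'') + (lam*l2' + (1-lam)*l2'') := by ring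
  rw [hh2bar] at key
  have hcross : lam*(s'*n') + (1-lam)*(s''*n'') = (s''-s')*((1-lam)*n'') := by
    rw [hlam]; field_simp; ring
  have hp : 0 ≤ (s''-s')*((1-lam)*n'') :=
    mul_nonneg (by linarith) (mul_nonneg (by linarith) hn''.le)
  have hWle : lam*(x - s'*n' + s2*m2' - b2*l2') + (1-lam)*(x - s''*n'' + s2*m2'' - b2*l2'')
      ≤ x + s2*(lam*m2' + (1-lam)*m2'') - b2*(lam*l2' + (1-lam)*l2'') := by
    nlinarith [hcross, hp]
  have hWnn : 0 ≤ lam*(x - s'*n' + s2*m2' - b2*l2') + (1-lam)*(x - s''*n'' + s2*m2'' - b2*l2'') := by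
    have e1 := mul_nonneg hlpos.le f5'
    have e2 := mul_nonneg (by linarith : (0:ℝ) ≤ 1 - lam) f5''
    linarith
  have hmbar0 : 0 ≤ lam*m2' + (1-lam)*m2'' := by
    have e1 := mul_nonneg hlpos.le f3'
    have e2 := mul_nonneg (by linarith : (0:ℝ) ≤ 1 - lam) f3''
    linarith
  have hlbar0 : 0 ≤ lam*l2' + (1-lam)*l2'' := by
    have e1 := mul_nonneg hlpos.le f2'
    have e2 := mul_nonneg (by linarith : (0:ℝ) ≤ 1 - lam) f2''
    linarith
  have hmbary : lam*m2' + (1-lam)*m2'' ≤ y2 := by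
    have e1 := mul_le_mul_of_nonneg_left f4' hlpos.le
    have e2 := mul_le_mul_of_nonneg_left f4'' (by linarith : (0:ℝ) ≤ 1 - lam)
    nlinarith
  have hh2barnn : 0 ≤ y2 - (lam*m2' + (1-lam)*m2'') + (lam*l2' + (1-lam)*l2'') := by linarith
  have hub := hM0 (lam*l2' + (1-lam)*l2'') (lam*m2' + (1-lam)*m2'') hlbar0 hmbar0 hmbary
    (by linarith)
  have hmono := gmono hg1 hg2 hg3 hWnn hy1 hh2barnn hWle le_rfl le_rfl
  have hMlt : M < lam * g (x - s'*n' + s2*m2' - b2*l2') (y1+n') (y2 - m2' + l2')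
      + (1-lam) * g (x - s''*n'' + s2*m2'' - b2*l2'') (y1+n'') (y2 - m2'' + l2'') := by
    nlinarith [mul_lt_mul_of_pos_left hv' hlpos,
      mul_lt_mul_of_pos_left hv'' (by linarith : (0:ℝ) < 1 - lam)]
  linarith


lemma buy_perturb
    (hg : StrictConcaveOn ℝ {v : ℝ × ℝ × ℝ | 0 ≤ v.1 ∧ 0 ≤ v.2.1 ∧ 0 ≤ v.2.2}
      (fun v => g v.1 v.2.1 v.2.2))
    (hg1 : ∀ a aQ b c : ℝ, 0 ≤ a → 0 ≤ b → 0 ≤ c → a < aQ → g a b c < g aQ b c)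
    (hg2 : ∀ a b bQ c : ℝ, 0 ≤ a → 0 ≤ b → 0 ≤ c → b < bQ → g a b c < g a bQ c)
    (hg3 : ∀ a b c cQ : ℝ, 0 ≤ a → 0 ≤ b → 0 ≤ c → c < cQ → g a b c < g a b cQ)
    {x y1 y2 s2 b2 M s : ℝ} (hy1 : 0 ≤ y1) (hs : 0 < s)
    (hB : BuyI g x y1 y2 s2 b2 M s) {ε0 : ℝ} (hε0 : 0 < ε0) :
    ∃ ε, 0 < ε ∧ ε < ε0 ∧ BuyI g x y1 y2 s2 b2 M (s + ε) := by
  obtain ⟨n, l2, m2, ⟨f1, f2, f3, f4, f5⟩, hn, hv⟩ := hB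
  simp only [pval] at hv
  have hh2 : 0 ≤ y2 - m2 + l2 := by linarith
  rcases eq_or_lt_of_le f5 with hw0 | hw
  · -- zero cash case: scale down the purchase
    have hv0 : M < g 0 (y1+n) (y2-m2+l2) := by rw [← hw0] at hv; exact hv
    have hη : (0:ℝ) < 2*ε0/s := by positivity
    obtain ⟨ρ, hρ0, hρ1, hρη, hcombo⟩ := combo hg le_rfl (by linarith) hh2
      (by positivity : (0:ℝ) ≤ s*n/2) hy1 hh2 hv0 hη
    have hρs : ρ * s < 2 * ε0 := by
      have := (lt_div_iff₀ hs).1 hρη; linarith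
    have hnρ : 0 < n*(1-ρ) := mul_pos hn (by linarith)
    have ecash : x - (s + ρ*s/2)*(n*(1-ρ)) + s2*m2 - b2*l2
        = (x - s*n + s2*m2 - b2*l2) + s*n*(ρ/2 + ρ*ρ/2) := by ring
    have hcashval : x - (s + ρ*s/2)*(n*(1-ρ)) + s2*m2 - b2*l2 = s*n*(ρ/2 + ρ*ρ/2) := by
      rw [ecash, ← hw0]; ring
    have hcashnn : 0 ≤ x - (s + ρ*s/2)*(n*(1-ρ)) + s2*m2 - b2*l2 := by
      rw [hcashval]; positivity
    refine ⟨ρ*s/2, by positivity, by linarith, n*(1-ρ), l2, m2,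
      ⟨by nlinarith, f2, f3, f4, hcashnn⟩, hnρ, ?_⟩
    simp only [pval]
    have e1 : (1-ρ)*0 + ρ*(s*n/2) = ρ*s*n/2 := by ring
    have e2 : (1-ρ)*(y1+n) + ρ*y1 = y1 + n*(1-ρ) := by ring
    have e3 : (1-ρ)*(y2-m2+l2) + ρ*(y2-m2+l2) = y2-m2+l2 := by ring
    rw [e1, e2, e3] at hcombo
    refine hcombo.trans_le (gmono hg1 hg2 hg3 (by positivity) (by linarith) hh2 ?_ le_rfl le_rfl)
    rw [hcashval]
    nlinarith [mul_pos hs hn, mul_pos (mul_pos hρ0 hρ0) (mul_pos hs hn)]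
  · -- positive cash case: keep the plan, absorb the extra cost from the cash buffer
    have hη : (0:ℝ) < n*ε0/(x - s*n + s2*m2 - b2*l2) := by positivity
    obtain ⟨ρ, hρ0, hρ1, hρη, hcombo⟩ := combo hg hw.le f1 hh2
      le_rfl f1 hh2 hv hη
    have hρw : ρ * (x - s*n + s2*m2 - b2*l2) < n*ε0 := (lt_div_iff₀ hw).1 hρη
    have hεlt : ρ*(x - s*n + s2*m2 - b2*l2)/n < ε0 := by
      rw [div_lt_iff₀ hn]; nlinarith
    have e0 : x - (s + ρ*(x - s*n + s2*m2 - b2*l2)/n)*n + s2*m2 - b2*l2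
        = (1-ρ)*(x - s*n + s2*m2 - b2*l2) + ρ*0 := by
      have hne : n ≠ 0 := by linarith
      field_simp
      ring
    refine ⟨ρ*(x - s*n + s2*m2 - b2*l2)/n, by positivity, hεlt, n, l2, m2,
      ⟨f1, f2, f3, f4, ?_⟩, hn, ?_⟩
    · rw [e0]; nlinarith
    · simp only [pval]
      rw [e0]
      have e2 : (1-ρ)*(y1+n) + ρ*(y1+n) = y1 + n := by ring
      have e3 : (1-ρ)*(y2-m2+l2) + ρ*(y2-m2+l2) = y2-m2+l2 := by ring
      rw [e2, e3] at hcombo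
      exact hcombo

lemma sell_perturb
    (hg : StrictConcaveOn ℝ {v : ℝ × ℝ × ℝ | 0 ≤ v.1 ∧ 0 ≤ v.2.1 ∧ 0 ≤ v.2.2}
      (fun v => g v.1 v.2.1 v.2.2))
    (hg1 : ∀ a aQ b c : ℝ, 0 ≤ a → 0 ≤ b → 0 ≤ c → a < aQ → g a b c < g aQ b c)
    (hg2 : ∀ a b bQ c : ℝ, 0 ≤ a → 0 ≤ b → 0 ≤ c → b < bQ → g a b c < g a bQ c)
    (hg3 : ∀ a b c cQ : ℝ, 0 ≤ a → 0 ≤ b → 0 ≤ c → c < cQ → g a b c < g a b cQ)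
    {x y1 y2 s2 b2 M s : ℝ} (hx : 0 ≤ x) (hs : 0 < s) (hs2 : 0 < s2) (hb2 : 0 < b2)
    (hS : SellI g x y1 y2 s2 b2 M s) {ε0 : ℝ} (hε0 : 0 < ε0) :
    ∃ ε, 0 < ε ∧ ε < ε0 ∧ SellI g x y1 y2 s2 b2 M (s - ε) := by
  obtain ⟨n, l2, m2, ⟨f1, f2, f3, f4, f5⟩, hn, hv⟩ := hS
  simp only [pval] at hv
  have hh2 : 0 ≤ y2 - m2 + l2 := by linarith
  have hnn : 0 < -n := by linarith
  rcases eq_or_lt_of_le f5 with hw0 | hw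
  · -- zero cash case: l2 must be positive; reduce the asset-2 purchase
    have hl2pos : 0 < l2 := by nlinarith [mul_pos hs hnn, mul_nonneg hs2.le f3]
    have hv0 : M < g 0 (y1+n) (y2-m2+l2) := by rw [← hw0] at hv; exact hv
    have hη : (0:ℝ) < 2*(-n)*ε0/(b2*l2) := by positivity
    obtain ⟨ρ, hρ0, hρ1, hρη, hcombo⟩ := combo hg le_rfl f1 hh2
      (by positivity : (0:ℝ) ≤ b2*l2/2) f1 (by linarith : (0:ℝ) ≤ y2 - m2 + l2 - l2) hv0 hη
    have hρb : ρ * (b2*l2) < 2*(-n)*ε0 := (lt_div_iff₀ (by positivity)).1 hρη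
    have hεlt : ρ*b2*l2/(2*(-n)) < ε0 := by
      rw [div_lt_iff₀ (by positivity : (0:ℝ) < 2*(-n))]; nlinarith
    have e : x - (s - ρ*b2*l2/(2*(-n)))*n + s2*m2 - b2*((1-ρ)*l2)
        = (x - s*n + s2*m2 - b2*l2) + ρ*(b2*l2)/2 := by
      have hne : n ≠ 0 := by linarith
      field_simp
      ring
    have ecash : x - (s - ρ*b2*l2/(2*(-n)))*n + s2*m2 - b2*((1-ρ)*l2) = ρ*(b2*l2)/2 := by
      rw [e, ← hw0]; ring
    refine ⟨ρ*b2*l2/(2*(-n)), by positivity, hεlt, n, (1-ρ)*l2, m2,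
      ⟨f1, by nlinarith, f3, f4, ?_⟩, hn, ?_⟩
    · rw [ecash]; positivity
    · simp only [pval]
      have e' : x - (s - ρ*b2*l2/(2*(-n)))*n + s2*m2 - b2*((1-ρ)*l2)
          = (1-ρ)*0 + ρ*(b2*l2/2) := by rw [ecash]; ring
      have e2 : (1-ρ)*(y1+n) + ρ*(y1+n) = y1 + n := by ring
      have e3 : (1-ρ)*(y2-m2+l2) + ρ*(y2-m2+l2-l2) = y2 - m2 + (1-ρ)*l2 := by ring
      rw [e']
      rw [e2, e3] at hcombo
      exact hcombo
  · -- positive cash case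
    have hη : (0:ℝ) < (-n)*ε0/(x - s*n + s2*m2 - b2*l2) := by positivity
    obtain ⟨ρ, hρ0, hρ1, hρη, hcombo⟩ := combo hg hw.le f1 hh2
      le_rfl f1 hh2 hv hη
    have hρw : ρ * (x - s*n + s2*m2 - b2*l2) < (-n)*ε0 := (lt_div_iff₀ hw).1 hρη
    have hεlt : ρ*(x - s*n + s2*m2 - b2*l2)/(-n) < ε0 := by
      rw [div_lt_iff₀ hnn]; nlinarith
    have e0 : x - (s - ρ*(x - s*n + s2*m2 - b2*l2)/(-n))*n + s2*m2 - b2*l2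
        = (1-ρ)*(x - s*n + s2*m2 - b2*l2) + ρ*0 := by
      have hne : n ≠ 0 := by linarith
      field_simp
      ring
    refine ⟨ρ*(x - s*n + s2*m2 - b2*l2)/(-n), by positivity, hεlt, n, l2, m2,
      ⟨f1, f2, f3, f4, ?_⟩, hn, ?_⟩
    · rw [e0]; nlinarith
    · simp only [pval]
      rw [e0]
      have e2 : (1-ρ)*(y1+n) + ρ*(y1+n) = y1 + n := by ring
      have e3 : (1-ρ)*(y2-m2+l2) + ρ*(y2-m2+l2) = y2-m2+l2 := by ring
      rw [e2, e3] at hcombo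
      exact hcombo


/-- Existence of a shadow price: some s in [s1,b1] admits neither an improving sale
nor an improving purchase of asset 1. -/
lemma exists_price
    (hg : StrictConcaveOn ℝ {v : ℝ × ℝ × ℝ | 0 ≤ v.1 ∧ 0 ≤ v.2.1 ∧ 0 ≤ v.2.2}
      (fun v => g v.1 v.2.1 v.2.2))
    (hg1 : ∀ a aQ b c : ℝ, 0 ≤ a → 0 ≤ b → 0 ≤ c → a < aQ → g a b c < g aQ b c)
    (hg2 : ∀ a b bQ c : ℝ, 0 ≤ a → 0 ≤ b → 0 ≤ c → b < bQ → g a b c < g a bQ c)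
    (hg3 : ∀ a b c cQ : ℝ, 0 ≤ a → 0 ≤ b → 0 ≤ c → c < cQ → g a b c < g a b cQ)
    {x y1 y2 s1 s2 b1 b2 M : ℝ} (hx : 0 ≤ x) (hy1 : 0 ≤ y1)
    (hD : memD s1 s2 b1 b2)
    (hM0 : ∀ l2 m2 : ℝ, 0 ≤ l2 → 0 ≤ m2 → m2 ≤ y2 → 0 ≤ x + s2*m2 - b2*l2 →
      g (x + s2*m2 - b2*l2) y1 (y2 - m2 + l2) ≤ M)
    (hNS : ¬ SellI g x y1 y2 s2 b2 M s1) (hNB : ¬ BuyI g x y1 y2 s2 b2 M b1) :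
    ∃ s, s1 ≤ s ∧ s ≤ b1 ∧ ¬ SellI g x y1 y2 s2 b2 M s ∧ ¬ BuyI g x y1 y2 s2 b2 M s := by
  obtain ⟨hs1, hs1b, hs2, hs2b⟩ := hD
  have hb2 : 0 < b2 := lt_of_lt_of_le hs2 hs2b
  set T := {s : ℝ | s1 ≤ s ∧ s ≤ b1 ∧ ¬ SellI g x y1 y2 s2 b2 M s} with hT
  have hTmem : s1 ∈ T := ⟨le_rfl, hs1b, hNS⟩
  have hTne : T.Nonempty := ⟨s1, hTmem⟩
  have hTbdd : BddAbove T := ⟨b1, fun t ht => ht.2.1⟩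
  set c := sSup T with hc
  have hc1 : s1 ≤ c := le_csSup hTbdd hTmem
  have hc2 : c ≤ b1 := csSup_le hTne (fun t ht => ht.2.1)
  have hcpos : 0 < c := lt_of_lt_of_le hs1 hc1
  have hNSc : ¬ SellI g x y1 y2 s2 b2 M c := by
    intro hSc
    rcases eq_or_lt_of_le hc1 with he | hlt
    · exact hNS (he ▸ hSc)
    · obtain ⟨ε, hε, hεlt, hS⟩ := sell_perturb hg hg1 hg2 hg3 hx hcpos hs2 hb2 hSc
        (show (0:ℝ) < c - s1 by linarith)
      obtain ⟨t, htT, htlt⟩ := exists_lt_of_lt_csSup hTne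
        (show c - ε < sSup T by rw [← hc]; linarith)
      exact htT.2.2 (sell_mono hg1 hg2 hg3 htlt.le hS)
  have hNBc : ¬ BuyI g x y1 y2 s2 b2 M c := by
    intro hBc
    rcases eq_or_lt_of_le hc2 with he | hlt
    · exact hNB (he ▸ hBc)
    · obtain ⟨ε, hε, hεlt, hB⟩ := buy_perturb hg hg1 hg2 hg3 hy1 hcpos hBc
        (show (0:ℝ) < b1 - c by linarith)
      have hnotT : c + ε ∉ T := by
        intro hmem
        have := le_csSup hTbdd hmem
        rw [← hc] at this
        linarith
      have hSell : SellI g x y1 y2 s2 b2 M (c+ε) := by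
        by_contra hns
        exact hnotT ⟨by linarith, by linarith, hns⟩
      exact no_both hg hg1 hg2 hg3 hy1 hM0 le_rfl hSell hB
  exact ⟨c, hc1, hc2, hNSc, hNBc⟩


lemma phi_eval (g : ℝ → ℝ → ℝ → ℝ) (x y1 y2 s1 s2 b1 b2 l1 l2 m1 m2 : ℝ) :
    phi g x y1 y2 s1 s2 b1 b2 (l1, l2, m1, m2)
      = g (x + s1*m1 + s2*m2 - b1*l1 - b2*l2) (y1 - m1 + l1) (y2 - m2 + l2) := rfl

lemma memA_iff {x y1 y2 s1 s2 b1 b2 l1 l2 m1 m2 : ℝ} :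
    (l1, l2, m1, m2) ∈ A x y1 y2 s1 s2 b1 b2 ↔
      (0 ≤ l1 ∧ 0 ≤ l2 ∧ 0 ≤ m1 ∧ 0 ≤ m2 ∧
       0 ≤ x + s1*m1 + s2*m2 - b1*l1 - b2*l2 ∧
       0 ≤ y1 - m1 + l1 ∧ 0 ≤ y2 - m2 + l2 ∧ m1 ≤ y1 ∧ m2 ≤ y2) := Iff.rfl

lemma sign_zero_prod {a b c d : ℝ} (ha : 0 ≤ a) (hb : 0 ≤ b) (hc : 0 ≤ c) (hd : 0 ≤ d)
    (hsgn : (0:ℝ) = Real.sign (a - c)) (hprod : a*c + b*d = 0) : a = 0 ∧ c = 0 := by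
  have hac : a = c := by
    have := Real.sign_eq_zero_iff.1 hsgn.symm
    linarith
  have h1 : a*c = 0 := by nlinarith [mul_nonneg hb hd, mul_nonneg ha hc]
  have ha0 : a = 0 := by nlinarith [sq_nonneg a]
  exact ⟨ha0, by linarith⟩

lemma Phi_eq' {x y1 y2 s1 s2 b1 b2 : ℝ} {q : ℝ×ℝ×ℝ×ℝ} (hq : q ∈ A x y1 y2 s1 s2 b1 b2)
    (hub : ∀ r ∈ A x y1 y2 s1 s2 b1 b2,
      phi g x y1 y2 s1 s2 b1 b2 r ≤ phi g x y1 y2 s1 s2 b1 b2 q) :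
    Phi g x y1 y2 s1 s2 b1 b2 = phi g x y1 y2 s1 s2 b1 b2 q := by
  have hubS : ∀ z ∈ phi g x y1 y2 s1 s2 b1 b2 '' A x y1 y2 s1 s2 b1 b2,
      z ≤ phi g x y1 y2 s1 s2 b1 b2 q := by
    rintro z ⟨r, hr, rfl⟩; exact hub r hr
  apply le_antisymm
  · exact csSup_le ⟨_, mem_image_of_mem _ hq⟩ hubS
  · exact le_csSup ⟨_, hubS⟩ (mem_image_of_mem _ hq)

end S18

set_option maxHeartbeats 2000000 in
/-- decomposition of the no-transaction zone for the first asset: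
𝐭^{(0,i)}(s̲₁,s̲₂,s̄₁,s̄₂) = ⋃_{s ∈ [s̲₁,s̄₁]} 𝐭^{(0,i)}(s,s̲₂,s,s̄₂). -/
theorem statement18
    (g : ℝ → ℝ → ℝ → ℝ)
    (hg : StrictConcaveOn ℝ {v : ℝ × ℝ × ℝ | 0 ≤ v.1 ∧ 0 ≤ v.2.1 ∧ 0 ≤ v.2.2}
      (fun v => g v.1 v.2.1 v.2.2))
    (hg1 : ∀ a aQ b c : ℝ, 0 ≤ a → 0 ≤ b → 0 ≤ c → a < aQ → g a b c < g aQ b c)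
    (hg2 : ∀ a b bQ c : ℝ, 0 ≤ a → 0 ≤ b → 0 ≤ c → b < bQ → g a b c < g a bQ c)
    (hg3 : ∀ a b c cQ : ℝ, 0 ≤ a → 0 ≤ b → 0 ≤ c → c < cQ → g a b c < g a b cQ)
    (s1 s2 b1 b2 : ℝ) (hD : memD s1 s2 b1 b2)
    (i : ℝ) (hi : i ∈ ({-1, 0, 1} : Set ℝ)) :
    tset g 0 i s1 s2 b1 b2 = ⋃ s ∈ Set.Icc s1 b1, tset g 0 i s s2 s b2 := by
  obtain ⟨hs1, hs1b, hs2, hs2b⟩ := hD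
  have hb1 : 0 < b1 := lt_of_lt_of_le hs1 hs1b
  have hb2 : 0 < b2 := lt_of_lt_of_le hs2 hs2b
  ext v
  obtain ⟨x, y1, y2⟩ := v
  simp only [tset, Asgn, Set.mem_setOf_eq, Set.mem_iUnion, exists_prop, Set.mem_Icc]
  constructor
  · rintro ⟨hx, hy1, hy2, q, ⟨hqA, hsgn1, hsgn2, hprod⟩, hPhi⟩
    obtain ⟨l1, l2, m1, m2⟩ := q
    rw [S18.memA_iff] at hqA
    obtain ⟨a1, a2, a3, a4, a5, a6, a7, a8, a9⟩ := hqA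
    have hsgn1' : (0:ℝ) = Real.sign (l1 - m1) := hsgn1
    have hsgn2' : i = Real.sign (l2 - m2) := hsgn2
    have hprod' : l1*m1 + l2*m2 = 0 := hprod
    obtain ⟨hl10, hm10⟩ := S18.sign_zero_prod a1 a2 a3 a4 hsgn1' hprod'
    subst hl10; subst hm10
    obtain ⟨M, hMdef⟩ : ∃ M : ℝ, M = g (x + s2*m2 - b2*l2) y1 (y2 - m2 + l2) := ⟨_, rfl⟩
    have hMq : phi g x y1 y2 s1 s2 b1 b2 ((0:ℝ), l2, (0:ℝ), m2) = M := by
      rw [S18.phi_eval, show x + s1*0 + s2*m2 - b1*0 - b2*l2 = x + s2*m2 - b2*l2 from by ring,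
        show y1 - 0 + 0 = y1 from by ring]
      exact hMdef.symm
    have hPhiM : Phi g x y1 y2 s1 s2 b1 b2 = M := by rw [hPhi, hMq]
    have hub : ∀ r ∈ A x y1 y2 s1 s2 b1 b2, phi g x y1 y2 s1 s2 b1 b2 r ≤ M := by
      intro r hr
      have h := le_csSup (S18.bddAboveA hg1 hg2 hg3 hx hy1 hy2 ⟨hs1, hs1b, hs2, hs2b⟩)
        (mem_image_of_mem (phi g x y1 y2 s1 s2 b1 b2) hr)
      exact le_trans h (le_of_eq hPhiM)
    have hM0 : ∀ l2' m2' : ℝ, 0 ≤ l2' → 0 ≤ m2' → m2' ≤ y2 → 0 ≤ x + s2*m2' - b2*l2' →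
        g (x + s2*m2' - b2*l2') y1 (y2 - m2' + l2') ≤ M := by
      intro l2' m2' g1 g2 g3 g4
      have hrA : ((0:ℝ), l2', (0:ℝ), m2') ∈ A x y1 y2 s1 s2 b1 b2 := by
        rw [S18.memA_iff]
        refine ⟨le_rfl, g1, le_rfl, g2, by nlinarith, by linarith, by linarith, hy1, g3⟩
      have h := hub _ hrA
      rwa [S18.phi_eval, show x + s1*0 + s2*m2' - b1*0 - b2*l2' = x + s2*m2' - b2*l2' from by ring,
        show y1 - 0 + 0 = y1 from by ring] at h
    have hNS : ¬ S18.SellI g x y1 y2 s2 b2 M s1 := by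
      rintro ⟨n, l2', m2', ⟨f1, f2, f3, f4, f5⟩, hn, hval⟩
      have hrA : ((0:ℝ), l2', -n, m2') ∈ A x y1 y2 s1 s2 b1 b2 := by
        rw [S18.memA_iff]
        refine ⟨le_rfl, f2, by linarith, f3, by nlinarith, by nlinarith, by linarith,
          by linarith, f4⟩
      have h := hub _ hrA
      rw [S18.phi_eval,
        show x + s1*(-n) + s2*m2' - b1*0 - b2*l2' = x - s1*n + s2*m2' - b2*l2' from by ring,
        show y1 - (-n) + 0 = y1 + n from by ring] at h
      simp only [S18.pval] at hval
      linarith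
    have hNB : ¬ S18.BuyI g x y1 y2 s2 b2 M b1 := by
      rintro ⟨n, l2', m2', ⟨f1, f2, f3, f4, f5⟩, hn, hval⟩
      have hrA : (n, l2', (0:ℝ), m2') ∈ A x y1 y2 s1 s2 b1 b2 := by
        rw [S18.memA_iff]
        refine ⟨hn.le, f2, le_rfl, f3, by nlinarith, by nlinarith, by linarith, hy1, f4⟩
      have h := hub _ hrA
      rw [S18.phi_eval,
        show x + s1*0 + s2*m2' - b1*n - b2*l2' = x - b1*n + s2*m2' - b2*l2' from by ring,
        show y1 - 0 + n = y1 + n from by ring] at h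
      simp only [S18.pval] at hval
      linarith
    obtain ⟨s, hss1, hssb1, hNSs, hNBs⟩ := S18.exists_price hg hg1 hg2 hg3 hx hy1
      ⟨hs1, hs1b, hs2, hs2b⟩ hM0 hNS hNB
    have hs0 : 0 < s := lt_of_lt_of_le hs1 hss1
    have hMqs : phi g x y1 y2 s s2 s b2 ((0:ℝ), l2, (0:ℝ), m2) = M := by
      rw [S18.phi_eval, show x + s*0 + s2*m2 - s*0 - b2*l2 = x + s2*m2 - b2*l2 from by ring,
        show y1 - 0 + 0 = y1 from by ring]
      exact hMdef.symm
    have hqAs : ((0:ℝ), l2, (0:ℝ), m2) ∈ A x y1 y2 s s2 s b2 := by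
      rw [S18.memA_iff]
      refine ⟨le_rfl, a2, le_rfl, a4, by nlinarith, a6, a7, a8, a9⟩
    refine ⟨s, ⟨hss1, hssb1⟩, hx, hy1, hy2, ((0:ℝ), l2, (0:ℝ), m2),
      ⟨hqAs, hsgn1, hsgn2, hprod⟩, ?_⟩
    apply S18.Phi_eq' hqAs
    intro r hr
    obtain ⟨rl1, rl2, rm1, rm2⟩ := r
    rw [S18.memA_iff] at hr
    obtain ⟨c1, c2, c3, c4, c5, c6, c7, c8, c9⟩ := hr
    rw [hMqs]
    have hf1 : 0 ≤ y1 + (rl1 - rm1) := by nlinarith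
    have hf5 : 0 ≤ x - s*(rl1 - rm1) + s2*rm2 - b2*rl2 := by nlinarith
    have hpv : S18.pval g x y1 y2 s2 b2 s (rl1 - rm1) rl2 rm2
        = phi g x y1 y2 s s2 s b2 (rl1, rl2, rm1, rm2) := by
      rw [S18.phi_eval]
      simp only [S18.pval]
      rw [show x - s*(rl1 - rm1) + s2*rm2 - b2*rl2
          = x + s*rm1 + s2*rm2 - s*rl1 - b2*rl2 from by ring,
        show y1 + (rl1 - rm1) = y1 - rm1 + rl1 from by ring]
    rcases lt_trichotomy (rl1 - rm1) 0 with hlt | heq | hgt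
    · by_contra hcon
      push_neg at hcon
      exact hNSs ⟨rl1 - rm1, rl2, rm2, ⟨hf1, c2, c4, c9, hf5⟩, hlt, by rw [hpv]; exact hcon⟩
    · have hl1m1 : rl1 = rm1 := by linarith
      have h := hM0 rl2 rm2 c2 c4 c9 (by nlinarith)
      rw [S18.phi_eval]
      rw [show x + s*rm1 + s2*rm2 - s*rl1 - b2*rl2 = x + s2*rm2 - b2*rl2 from by
          rw [hl1m1]; ring,
        show y1 - rm1 + rl1 = y1 from by rw [hl1m1]; ring]
      exact h
    · by_contra hcon
      push_neg at hcon
      exact hNBs ⟨rl1 - rm1, rl2, rm2, ⟨hf1, c2, c4, c9, hf5⟩, hgt, by rw [hpv]; exact hcon⟩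
  · rintro ⟨s, ⟨hss1, hssb1⟩, hx, hy1, hy2, q, ⟨hqA, hsgn1, hsgn2, hprod⟩, hPhi⟩
    obtain ⟨l1, l2, m1, m2⟩ := q
    rw [S18.memA_iff] at hqA
    obtain ⟨a1, a2, a3, a4, a5, a6, a7, a8, a9⟩ := hqA
    have hsgn1' : (0:ℝ) = Real.sign (l1 - m1) := hsgn1
    have hsgn2' : i = Real.sign (l2 - m2) := hsgn2
    have hprod' : l1*m1 + l2*m2 = 0 := hprod
    obtain ⟨hl10, hm10⟩ := S18.sign_zero_prod a1 a2 a3 a4 hsgn1' hprod'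
    subst hl10; subst hm10
    have hs0 : 0 < s := lt_of_lt_of_le hs1 hss1
    have hqA1 : ((0:ℝ), l2, (0:ℝ), m2) ∈ A x y1 y2 s1 s2 b1 b2 := by
      rw [S18.memA_iff]
      refine ⟨le_rfl, a2, le_rfl, a4, by nlinarith, a6, a7, a8, a9⟩
    refine ⟨hx, hy1, hy2, ((0:ℝ), l2, (0:ℝ), m2), ⟨hqA1, hsgn1, hsgn2, hprod⟩, ?_⟩
    have hqq : phi g x y1 y2 s1 s2 b1 b2 ((0:ℝ), l2, (0:ℝ), m2)
        = phi g x y1 y2 s s2 s b2 ((0:ℝ), l2, (0:ℝ), m2) := by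
      rw [S18.phi_eval, S18.phi_eval,
        show x + s1*0 + s2*m2 - b1*0 - b2*l2 = x + s*0 + s2*m2 - s*0 - b2*l2 from by ring]
    apply S18.Phi_eq' hqA1
    intro r hr
    obtain ⟨rl1, rl2, rm1, rm2⟩ := r
    rw [S18.memA_iff] at hr
    obtain ⟨c1, c2, c3, c4, c5, c6, c7, c8, c9⟩ := hr
    have hcash : x + s1*rm1 + s2*rm2 - b1*rl1 - b2*rl2 ≤ x + s*rm1 + s2*rm2 - s*rl1 - b2*rl2 := by
      nlinarith [mul_nonneg (sub_nonneg.2 hss1) c3, mul_nonneg (sub_nonneg.2 hssb1) c1]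
    have hrs : (rl1, rl2, rm1, rm2) ∈ A x y1 y2 s s2 s b2 :=
      S18.memA_iff.2 ⟨c1, c2, c3, c4, le_trans c5 hcash, c6, c7, c8, c9⟩
    have step1 : phi g x y1 y2 s1 s2 b1 b2 (rl1, rl2, rm1, rm2)
        ≤ phi g x y1 y2 s s2 s b2 (rl1, rl2, rm1, rm2) := by
      rw [S18.phi_eval, S18.phi_eval]
      exact S18.gmono hg1 hg2 hg3 c5 c6 c7 hcash le_rfl le_rfl
    have step2 : phi g x y1 y2 s s2 s b2 (rl1, rl2, rm1, rm2)
        ≤ phi g x y1 y2 s s2 s b2 ((0:ℝ), l2, (0:ℝ), m2) := by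
      have h := le_csSup (S18.bddAboveA hg1 hg2 hg3 hx hy1 hy2 ⟨hs0, le_rfl, hs2, hs2b⟩)
        (mem_image_of_mem (phi g x y1 y2 s s2 s b2) hrs)
      exact le_trans h (le_of_eq hPhi)
    rw [hqq]
    exact le_trans step1 step2
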